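/- If f : Ω → ℝ is a C^2 function on a domain Ω ⊆ ℝ^n whose graph is light-like everywhere (i.e. B_f ≡ 0 on Ω), then A_f ≡ 0 on Ω; that is, every light-like graph is a zero mean curvature graph. -/

import Mathlib

open scoped BigOperators
open RealInnerProductSpace

noncomputable def pd {n : ℕ} (f : EuclideanSpace ℝ (Fin n) → ℝ) (i : Fin n)
    (x : EuclideanSpace ℝ (Fin n)) : ℝ :=
  fderiv ℝ f x (EuclideanSpace.single i 1)

noncomputable def Bf {n : ℕ} (f : EuclideanSpace ℝ (Fin n) → ℝ)
    (x : EuclideanSpace ℝ (Fin n)) : ℝ :=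
  1 - ∑ i, (pd f i x) ^ 2

noncomputable def Af {n : ℕ} (f : EuclideanSpace ℝ (Fin n) → ℝ)
    (x : EuclideanSpace ℝ (Fin n)) : ℝ :=
  ∑ i, ∑ j, (Bf f x * (if i = j then (1 : ℝ) else 0) + pd f i x * pd f j x)
      * pd (pd f j) i x

theorem stmt1 {n : ℕ} (Ω : Set (EuclideanSpace ℝ (Fin n))) (hΩ : IsOpen Ω)
    (f : EuclideanSpace ℝ (Fin n) → ℝ) (hf : ContDiffOn ℝ 2 f Ω)
    (hlight : ∀ x ∈ Ω, Bf f x = 0) :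
    ∀ x ∈ Ω, Af f x = 0 := by
  -- differentiability of pd f j on Ω
  have hpd : ∀ x ∈ Ω, ∀ j : Fin n, DifferentiableAt ℝ (pd f j) x := by
    intro x hx j
    have hC : ContDiffAt ℝ 2 f x := hf.contDiffAt (hΩ.mem_nhds hx)
    have hfd : ContDiffAt ℝ 1 (fderiv ℝ f) x := by
      have := hC.fderiv_right (m := 1) (by norm_num)
      exact this
    exact ((ContinuousLinearMap.apply ℝ ℝ
      (EuclideanSpace.single j (1:ℝ))).differentiableAt).comp x
      (hfd.differentiableAt one_ne_zero)
  -- key identity: ∑ j, pd f j x * pd (pd f j) i x = 0 for x ∈ Ω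
  have key : ∀ x ∈ Ω, ∀ i : Fin n,
      ∑ j, pd f j x * pd (pd f j) i x = 0 := by
    intro x hx i
    have hg : HasFDerivAt (fun y => ∑ j, (pd f j y) ^ 2)
        (∑ j : Fin n, ((2:ℝ) * pd f j x) • fderiv ℝ (pd f j) x) x := by
      apply HasFDerivAt.fun_sum
      intro j _
      have h := ((hpd x hx j).hasFDerivAt).mul ((hpd x hx j).hasFDerivAt)
      have : (fun y => (pd f j y) ^ 2) = fun y => pd f j y * pd f j y := by
        funext y; ring
      rw [this]
      exact h.congr_fderiv (by rw [two_mul, add_smul])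
    have hconst : HasFDerivAt (fun y => ∑ j, (pd f j y) ^ 2)
        (0 : EuclideanSpace ℝ (Fin n) →L[ℝ] ℝ) x := by
      have heq : (fun y => ∑ j, (pd f j y) ^ 2) =ᶠ[nhds x] fun _ => (1:ℝ) := by
        filter_upwards [hΩ.mem_nhds hx] with y hy
        have := hlight y hy
        unfold Bf at this
        linarith
      exact (hasFDerivAt_const (1:ℝ) x).congr_of_eventuallyEq heq
    have hder : (∑ j : Fin n, ((2:ℝ) * pd f j x) • fderiv ℝ (pd f j) x)
        = 0 := hg.unique hconst
    have happ := congrArg (fun L => L (EuclideanSpace.single i (1:ℝ))) hder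
    simp only [ContinuousLinearMap.sum_apply, ContinuousLinearMap.smul_apply,
      ContinuousLinearMap.zero_apply, smul_eq_mul] at happ
    have : ∑ j, pd f j x * pd (pd f j) i x =
        (1/2) * ∑ j : Fin n, 2 * pd f j x * fderiv ℝ (pd f j) x
          (EuclideanSpace.single i (1:ℝ)) := by
      rw [Finset.mul_sum]
      refine Finset.sum_congr rfl fun j _ => ?_
      unfold pd
      ring
    rw [this, happ, mul_zero]
  intro x hx
  unfold Af
  have hB := hlight x hx
  rw [hB]
  have : ∀ i : Fin n, ∑ j, ((0:ℝ) * (if i = j then (1:ℝ) else 0)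
      + pd f i x * pd f j x) * pd (pd f j) i x = 0 := by
    intro i
    have := key x hx i
    calc ∑ j, ((0:ℝ) * (if i = j then (1:ℝ) else 0)
          + pd f i x * pd f j x) * pd (pd f j) i x
        = pd f i x * ∑ j, pd f j x * pd (pd f j) i x := by
          rw [Finset.mul_sum]; refine Finset.sum_congr rfl fun j _ => ?_; ring
      _ = 0 := by rw [this, mul_zero]
  exact Finset.sum_eq_zero fun i _ => this i
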